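/- Let Φ : ℝ² → ℝ be C² in variables (a,b) with Φ_{ab} = −Φ/4, and let r = (r¹,r²,r³) be a C² solution of the diagonalized drift flux system (S) on an open set U ⊆ ℝ². Then, evaluating Φ and its derivatives at (r¹(t,x), r²(t,x)), the triple η¹ := e^{(r²−r¹)/2}(Φ + 2Φ_a) r¹_x, η² := e^{(r²−r¹)/2}(Φ − 2Φ_b) r²_x, η³ := 2 e^{(r²−r¹)/2} Φ r³_x satisfies the linearized system of (S) along r on U. -/

import Mathlib

/- STATEMENT 17: the generalized symmetries 𝒫(Φ) of (S): for a solution Φ of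
Φ_{ab} = −Φ/4, the triple (e^{(r²−r¹)/2}(Φ+2Φ_a)r¹_x, e^{(r²−r¹)/2}(Φ−2Φ_b)r²_x,
2e^{(r²−r¹)/2}Φ r³_x) satisfies the linearized system of (S) along r. -/

noncomputable section

/-- Partial derivative with respect to the first ("time") variable. -/
def pt (f : ℝ × ℝ → ℝ) (p : ℝ × ℝ) : ℝ := fderiv ℝ f p (1, 0)

/-- Partial derivative with respect to the second ("space") variable. -/
def px (f : ℝ × ℝ → ℝ) (p : ℝ × ℝ) : ℝ := fderiv ℝ f p (0, 1)

/-- Partial derivative with respect to the first argument (a). -/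
def pa (f : ℝ × ℝ → ℝ) (q : ℝ × ℝ) : ℝ := fderiv ℝ f q (1, 0)

/-- Partial derivative with respect to the second argument (b). -/
def pb (f : ℝ × ℝ → ℝ) (q : ℝ × ℝ) : ℝ := fderiv ℝ f q (0, 1)


lemma fderiv_pair_eval (f : ℝ × ℝ → ℝ) (q : ℝ × ℝ) (x y : ℝ) :
    fderiv ℝ f q (x, y) = x * fderiv ℝ f q (1, 0) + y * fderiv ℝ f q (0, 1) := by
  have h : ((x, y) : ℝ × ℝ) = x • ((1:ℝ), (0:ℝ)) + y • ((0:ℝ), (1:ℝ)) := by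
    simp [Prod.ext_iff]
  rw [h, map_add, map_smul, map_smul, smul_eq_mul, smul_eq_mul]

lemma contDiff_pa (Φ : ℝ × ℝ → ℝ) (hΦ : ContDiff ℝ 2 Φ) : ContDiff ℝ 1 (pa Φ) :=
  (ContinuousLinearMap.apply ℝ ℝ (((1:ℝ), (0:ℝ)) : ℝ × ℝ)).contDiff.comp
    (hΦ.fderiv_right (by norm_num))

lemma contDiff_pb (Φ : ℝ × ℝ → ℝ) (hΦ : ContDiff ℝ 2 Φ) : ContDiff ℝ 1 (pb Φ) :=
  (ContinuousLinearMap.apply ℝ ℝ (((0:ℝ), (1:ℝ)) : ℝ × ℝ)).contDiff.comp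
    (hΦ.fderiv_right (by norm_num))


lemma key (F : ℝ × ℝ → ℝ) (hF : ContDiff ℝ 1 F)
    (r₁ r₂ u : ℝ × ℝ → ℝ) (p : ℝ × ℝ)
    (h1 : DifferentiableAt ℝ r₁ p) (h2 : DifferentiableAt ℝ r₂ p)
    (hu : DifferentiableAt ℝ u p) (v : ℝ × ℝ) :
    fderiv ℝ (fun q => Real.exp ((r₂ q - r₁ q) / 2) * F (r₁ q, r₂ q) * u q) p v
    = Real.exp ((r₂ p - r₁ p) / 2) *
      ( (fderiv ℝ r₂ p v - fderiv ℝ r₁ p v) / 2 * (F (r₁ p, r₂ p) * u p)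
      + (pa F (r₁ p, r₂ p) * fderiv ℝ r₁ p v + pb F (r₁ p, r₂ p) * fderiv ℝ r₂ p v) * u p
      + F (r₁ p, r₂ p) * fderiv ℝ u p v ) := by
  have hg : HasFDerivAt (fun q => (r₂ q - r₁ q) / 2)
      ((1 / (2:ℝ)) • (fderiv ℝ r₂ p - fderiv ℝ r₁ p)) p := by
    have := ((h2.hasFDerivAt.sub h1.hasFDerivAt).const_smul ((1:ℝ)/2))
    refine this.congr_of_eventuallyEq (Filter.Eventually.of_forall fun q => ?_)
    simp only [Pi.smul_apply, Pi.sub_apply, smul_eq_mul]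
    ring
  have hexp : HasFDerivAt (fun q => Real.exp ((r₂ q - r₁ q) / 2))
      (Real.exp ((r₂ p - r₁ p) / 2) • ((1 / (2:ℝ)) • (fderiv ℝ r₂ p - fderiv ℝ r₁ p))) p :=
    hg.exp
  have hc : HasFDerivAt (fun q => ((r₁ q, r₂ q) : ℝ × ℝ))
      ((fderiv ℝ r₁ p).prod (fderiv ℝ r₂ p)) p := h1.hasFDerivAt.prodMk h2.hasFDerivAt
  have hFd : HasFDerivAt F (fderiv ℝ F (r₁ p, r₂ p)) (r₁ p, r₂ p) :=
    ((hF.differentiable one_ne_zero) (r₁ p, r₂ p)).hasFDerivAt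
  have hFc : HasFDerivAt (fun q => F (r₁ q, r₂ q))
      ((fderiv ℝ F (r₁ p, r₂ p)).comp ((fderiv ℝ r₁ p).prod (fderiv ℝ r₂ p))) p :=
    hFd.comp p hc
  have htot : HasFDerivAt (fun q => Real.exp ((r₂ q - r₁ q) / 2) * F (r₁ q, r₂ q) * u q) _ p :=
    (hexp.mul hFc).mul hu.hasFDerivAt
  rw [htot.fderiv]
  simp only [ContinuousLinearMap.add_apply, ContinuousLinearMap.smul_apply,
    ContinuousLinearMap.comp_apply, ContinuousLinearMap.prod_apply,
    ContinuousLinearMap.sub_apply, smul_eq_mul, Pi.mul_apply]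
  rw [fderiv_pair_eval F (r₁ p, r₂ p) (fderiv ℝ r₁ p v) (fderiv ℝ r₂ p v)]
  show _ = Real.exp ((r₂ p - r₁ p) / 2) *
      ( (fderiv ℝ r₂ p v - fderiv ℝ r₁ p v) / 2 * (F (r₁ p, r₂ p) * u p)
      + ((fderiv ℝ F (r₁ p, r₂ p) (1,0)) * fderiv ℝ r₁ p v
          + (fderiv ℝ F (r₁ p, r₂ p) (0,1)) * fderiv ℝ r₂ p v) * u p
      + F (r₁ p, r₂ p) * fderiv ℝ u p v )
  ring

lemma diffAt_px {f : ℝ × ℝ → ℝ} {U : Set (ℝ × ℝ)} (hU : IsOpen U)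
    (hf : ContDiffOn ℝ 2 f U) {p : ℝ × ℝ} (hp : p ∈ U) (w : ℝ × ℝ) :
    DifferentiableAt ℝ (fun q => fderiv ℝ f q w) p := by
  have h1 : ContDiffOn ℝ 1 (fderiv ℝ f) U := hf.fderiv_of_isOpen hU (by norm_num)
  have h2 : DifferentiableAt ℝ (fderiv ℝ f) p :=
    (h1.differentiableOn one_ne_zero).differentiableAt (hU.mem_nhds hp)
  exact (ContinuousLinearMap.apply ℝ ℝ w).differentiable.differentiableAt.comp p h2

lemma swap_tx {f : ℝ × ℝ → ℝ} {U : Set (ℝ × ℝ)} (hU : IsOpen U)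
    (hf : ContDiffOn ℝ 2 f U) {p : ℝ × ℝ} (hp : p ∈ U) (v w : ℝ × ℝ) :
    fderiv ℝ (fun q => fderiv ℝ f q w) p v = fderiv ℝ (fun q => fderiv ℝ f q v) p w := by
  have hca : ContDiffAt ℝ 2 f p := hf.contDiffAt (hU.mem_nhds hp)
  have hsymm := hca.isSymmSndFDerivAt (by simp)
  have h1 : ContDiffOn ℝ 1 (fderiv ℝ f) U := hf.fderiv_of_isOpen hU (by norm_num)
  have hD : DifferentiableAt ℝ (fderiv ℝ f) p :=
    (h1.differentiableOn one_ne_zero).differentiableAt (hU.mem_nhds hp)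
  have e : ∀ z : ℝ × ℝ, HasFDerivAt (fun q => fderiv ℝ f q z)
      ((ContinuousLinearMap.apply ℝ ℝ z).comp (fderiv ℝ (fderiv ℝ f) p)) p := fun z =>
    (ContinuousLinearMap.apply ℝ ℝ z).hasFDerivAt.comp p hD.hasFDerivAt
  rw [(e w).fderiv, (e v).fderiv]
  simpa using hsymm v w

lemma pd_add_smul (f g : ℝ × ℝ → ℝ) (q : ℝ × ℝ) (hf : DifferentiableAt ℝ f q)
    (hg : DifferentiableAt ℝ g q) (k : ℝ) (v : ℝ × ℝ) :
    fderiv ℝ (fun z => f z + k * g z) q v = fderiv ℝ f q v + k * fderiv ℝ g q v := by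
  have hh : HasFDerivAt (fun z => f z + k * g z) _ q :=
    hf.hasFDerivAt.add (hg.hasFDerivAt.const_mul k)
  rw [hh.fderiv]
  simp

lemma pd_sub_smul (f g : ℝ × ℝ → ℝ) (q : ℝ × ℝ) (hf : DifferentiableAt ℝ f q)
    (hg : DifferentiableAt ℝ g q) (k : ℝ) (v : ℝ × ℝ) :
    fderiv ℝ (fun z => f z - k * g z) q v = fderiv ℝ f q v - k * fderiv ℝ g q v := by
  have hh : HasFDerivAt (fun z => f z - k * g z) _ q :=
    hf.hasFDerivAt.sub (hg.hasFDerivAt.const_mul k)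
  rw [hh.fderiv]
  simp

lemma pd_const_mul (f : ℝ × ℝ → ℝ) (q : ℝ × ℝ) (hf : DifferentiableAt ℝ f q)
    (k : ℝ) (v : ℝ × ℝ) :
    fderiv ℝ (fun z => k * f z) q v = k * fderiv ℝ f q v := by
  rw [(hf.hasFDerivAt.const_mul k).fderiv]
  simp

lemma pt_px_eq {r₁ r₂ f : ℝ × ℝ → ℝ} {U : Set (ℝ × ℝ)} (hU : IsOpen U) (c : ℝ)
    (h1 : ContDiffOn ℝ 2 r₁ U) (h2 : ContDiffOn ℝ 2 r₂ U) (hf : ContDiffOn ℝ 2 f U)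
    (hS : ∀ q ∈ U, pt f q + (r₁ q + r₂ q + c) * px f q = 0)
    {p : ℝ × ℝ} (hp : p ∈ U) :
    fderiv ℝ (fun q => px f q) p (1, 0)
      = -((px r₁ p + px r₂ p) * px f p)
        - (r₁ p + r₂ p + c) * fderiv ℝ (fun q => px f q) p (0, 1) := by
  have hswap : fderiv ℝ (fun q => px f q) p (1, 0)
      = fderiv ℝ (fun q => fderiv ℝ f q (1, 0)) p (0, 1) :=
    swap_tx hU hf hp (1, 0) (0, 1)
  have heq : (fun q => fderiv ℝ f q (1, 0))
      =ᶠ[nhds p] (fun q => -((r₁ q + r₂ q + c) * px f q)) := by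
    filter_upwards [hU.mem_nhds hp] with q hq
    have h := hS q hq
    simp only [pt] at h
    linarith
  have hd1 : DifferentiableAt ℝ r₁ p :=
    (h1.differentiableOn (by norm_num)).differentiableAt (hU.mem_nhds hp)
  have hd2 : DifferentiableAt ℝ r₂ p :=
    (h2.differentiableOn (by norm_num)).differentiableAt (hU.mem_nhds hp)
  have hdu : DifferentiableAt ℝ (fun q => px f q) p := diffAt_px hU hf hp (0, 1)
  have hA : HasFDerivAt (fun q => r₁ q + r₂ q + c)
      (fderiv ℝ r₁ p + fderiv ℝ r₂ p) p :=
    (hd1.hasFDerivAt.add hd2.hasFDerivAt).add_const c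
  have hprod : HasFDerivAt
      (fun q => -((r₁ q + r₂ q + c) * px f q)) _ p := (hA.mul hdu.hasFDerivAt).neg
  rw [hswap, heq.fderiv_eq, hprod.fderiv]
  simp only [ContinuousLinearMap.neg_apply, ContinuousLinearMap.add_apply,
    ContinuousLinearMap.smul_apply, smul_eq_mul]
  have : px r₁ p = fderiv ℝ r₁ p (0, 1) := rfl
  have : px r₂ p = fderiv ℝ r₂ p (0, 1) := rfl
  simp only [px]
  ring



theorem P_Phi_generalized_symmetries
    (Φ : ℝ × ℝ → ℝ) (hΦ : ContDiff ℝ 2 Φ)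
    (hKG : ∀ q : ℝ × ℝ, pb (pa Φ) q = -Φ q / 4)
    (U : Set (ℝ × ℝ)) (hU : IsOpen U)
    (r₁ r₂ r₃ : ℝ × ℝ → ℝ)
    (hr₁ : ContDiffOn ℝ 2 r₁ U) (hr₂ : ContDiffOn ℝ 2 r₂ U)
    (hr₃ : ContDiffOn ℝ 2 r₃ U)
    (hS₁ : ∀ p ∈ U, pt r₁ p + (r₁ p + r₂ p + 1) * px r₁ p = 0)
    (hS₂ : ∀ p ∈ U, pt r₂ p + (r₁ p + r₂ p - 1) * px r₂ p = 0)
    (hS₃ : ∀ p ∈ U, pt r₃ p + (r₁ p + r₂ p) * px r₃ p = 0) :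
    let η₁ : ℝ × ℝ → ℝ := fun p => Real.exp ((r₂ p - r₁ p) / 2) *
      (Φ (r₁ p, r₂ p) + 2 * pa Φ (r₁ p, r₂ p)) * px r₁ p
    let η₂ : ℝ × ℝ → ℝ := fun p => Real.exp ((r₂ p - r₁ p) / 2) *
      (Φ (r₁ p, r₂ p) - 2 * pb Φ (r₁ p, r₂ p)) * px r₂ p
    let η₃ : ℝ × ℝ → ℝ := fun p => 2 * Real.exp ((r₂ p - r₁ p) / 2) *
      Φ (r₁ p, r₂ p) * px r₃ p
    ∀ p ∈ U,
      pt η₁ p + (r₁ p + r₂ p + 1) * px η₁ p + (η₁ p + η₂ p) * px r₁ p = 0 ∧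
      pt η₂ p + (r₁ p + r₂ p - 1) * px η₂ p + (η₁ p + η₂ p) * px r₂ p = 0 ∧
      pt η₃ p + (r₁ p + r₂ p) * px η₃ p + (η₁ p + η₂ p) * px r₃ p = 0 := by
  intro η₁ η₂ η₃ p hp
  have hnp := hU.mem_nhds hp
  have d1 : DifferentiableAt ℝ r₁ p :=
    (hr₁.differentiableOn (by norm_num)).differentiableAt hnp
  have d2 : DifferentiableAt ℝ r₂ p :=
    (hr₂.differentiableOn (by norm_num)).differentiableAt hnp
  have du1 : DifferentiableAt ℝ (fun q => px r₁ q) p := diffAt_px hU hr₁ hp (0, 1)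
  have du2 : DifferentiableAt ℝ (fun q => px r₂ q) p := diffAt_px hU hr₂ hp (0, 1)
  have du3 : DifferentiableAt ℝ (fun q => px r₃ q) p := diffAt_px hU hr₃ hp (0, 1)
  have hpaC : ContDiff ℝ 1 (pa Φ) := contDiff_pa Φ hΦ
  have hpbC : ContDiff ℝ 1 (pb Φ) := contDiff_pb Φ hΦ
  have hΦ1 : ContDiff ℝ 1 Φ := hΦ.of_le (by norm_num)
  have hF₁ : ContDiff ℝ 1 (fun z => Φ z + 2 * pa Φ z) := hΦ1.add (contDiff_const.mul hpaC)
  have hF₂ : ContDiff ℝ 1 (fun z => Φ z - 2 * pb Φ z) := hΦ1.sub (contDiff_const.mul hpbC)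
  have hF₃ : ContDiff ℝ 1 (fun z => 2 * Φ z) := contDiff_const.mul hΦ1
  have ht1 : fderiv ℝ r₁ p (1, 0) = -((r₁ p + r₂ p + 1) * px r₁ p) := by
    have h := hS₁ p hp; simp only [pt] at h; linarith
  have ht2 : fderiv ℝ r₂ p (1, 0) = -((r₁ p + r₂ p - 1) * px r₂ p) := by
    have h := hS₂ p hp; simp only [pt] at h; linarith
  have htu1 := pt_px_eq hU 1 hr₁ hr₂ hr₁ hS₁ hp
  have htu2 := pt_px_eq hU (-1) hr₁ hr₂ hr₂
    (by intro q hq; have h := hS₂ q hq; linear_combination h) hp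
  have htu3 := pt_px_eq hU 0 hr₁ hr₂ hr₃
    (by intro q hq; have h := hS₃ q hq; linear_combination h) hp
  have hdΦc : DifferentiableAt ℝ Φ (r₁ p, r₂ p) := (hΦ1.differentiable one_ne_zero) _
  have hdpa : DifferentiableAt ℝ (pa Φ) (r₁ p, r₂ p) := (hpaC.differentiable one_ne_zero) _
  have hdpb : DifferentiableAt ℝ (pb Φ) (r₁ p, r₂ p) := (hpbC.differentiable one_ne_zero) _
  have hKGc : pb (pa Φ) (r₁ p, r₂ p) = -Φ (r₁ p, r₂ p) / 4 := hKG _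
  have hsymΦ : pa (pb Φ) (r₁ p, r₂ p) = pb (pa Φ) (r₁ p, r₂ p) :=
    swap_tx isOpen_univ hΦ.contDiffOn (Set.mem_univ _) (1, 0) (0, 1)
  have hpaF1 : pa (fun z => Φ z + 2 * pa Φ z) (r₁ p, r₂ p)
      = pa Φ (r₁ p, r₂ p) + 2 * pa (pa Φ) (r₁ p, r₂ p) :=
    pd_add_smul Φ (pa Φ) _ hdΦc hdpa 2 (1, 0)
  have hpbF1 : pb (fun z => Φ z + 2 * pa Φ z) (r₁ p, r₂ p)
      = pb Φ (r₁ p, r₂ p) + 2 * pb (pa Φ) (r₁ p, r₂ p) :=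
    pd_add_smul Φ (pa Φ) _ hdΦc hdpa 2 (0, 1)
  have hpaF2 : pa (fun z => Φ z - 2 * pb Φ z) (r₁ p, r₂ p)
      = pa Φ (r₁ p, r₂ p) - 2 * pa (pb Φ) (r₁ p, r₂ p) :=
    pd_sub_smul Φ (pb Φ) _ hdΦc hdpb 2 (1, 0)
  have hpbF2 : pb (fun z => Φ z - 2 * pb Φ z) (r₁ p, r₂ p)
      = pb Φ (r₁ p, r₂ p) - 2 * pb (pb Φ) (r₁ p, r₂ p) :=
    pd_sub_smul Φ (pb Φ) _ hdΦc hdpb 2 (0, 1)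
  have hpaF3 : pa (fun z => 2 * Φ z) (r₁ p, r₂ p) = 2 * pa Φ (r₁ p, r₂ p) :=
    pd_const_mul Φ _ hdΦc 2 (1, 0)
  have hpbF3 : pb (fun z => 2 * Φ z) (r₁ p, r₂ p) = 2 * pb Φ (r₁ p, r₂ p) :=
    pd_const_mul Φ _ hdΦc 2 (0, 1)
  refine ⟨?_, ?_, ?_⟩
  · have A := key (fun z => Φ z + 2 * pa Φ z) hF₁ r₁ r₂ (fun q => px r₁ q) p d1 d2 du1 (1, 0)
    have B := key (fun z => Φ z + 2 * pa Φ z) hF₁ r₁ r₂ (fun q => px r₁ q) p d1 d2 du1 (0, 1)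
    beta_reduce at A B
    show fderiv ℝ (fun q => Real.exp ((r₂ q - r₁ q) / 2) *
          (Φ (r₁ q, r₂ q) + 2 * pa Φ (r₁ q, r₂ q)) * px r₁ q) p (1, 0)
        + (r₁ p + r₂ p + 1) * fderiv ℝ (fun q => Real.exp ((r₂ q - r₁ q) / 2) *
          (Φ (r₁ q, r₂ q) + 2 * pa Φ (r₁ q, r₂ q)) * px r₁ q) p (0, 1)
        + (Real.exp ((r₂ p - r₁ p) / 2) * (Φ (r₁ p, r₂ p) + 2 * pa Φ (r₁ p, r₂ p)) * px r₁ p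
          + Real.exp ((r₂ p - r₁ p) / 2) * (Φ (r₁ p, r₂ p) - 2 * pb Φ (r₁ p, r₂ p)) * px r₂ p)
          * px r₁ p = 0
    rw [A, B, hpaF1, hpbF1, hKGc, ht1, ht2, htu1]
    simp only [px]
    ring
  · have A := key (fun z => Φ z - 2 * pb Φ z) hF₂ r₁ r₂ (fun q => px r₂ q) p d1 d2 du2 (1, 0)
    have B := key (fun z => Φ z - 2 * pb Φ z) hF₂ r₁ r₂ (fun q => px r₂ q) p d1 d2 du2 (0, 1)
    beta_reduce at A B
    show fderiv ℝ (fun q => Real.exp ((r₂ q - r₁ q) / 2) *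
          (Φ (r₁ q, r₂ q) - 2 * pb Φ (r₁ q, r₂ q)) * px r₂ q) p (1, 0)
        + (r₁ p + r₂ p - 1) * fderiv ℝ (fun q => Real.exp ((r₂ q - r₁ q) / 2) *
          (Φ (r₁ q, r₂ q) - 2 * pb Φ (r₁ q, r₂ q)) * px r₂ q) p (0, 1)
        + (Real.exp ((r₂ p - r₁ p) / 2) * (Φ (r₁ p, r₂ p) + 2 * pa Φ (r₁ p, r₂ p)) * px r₁ p
          + Real.exp ((r₂ p - r₁ p) / 2) * (Φ (r₁ p, r₂ p) - 2 * pb Φ (r₁ p, r₂ p)) * px r₂ p)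
          * px r₂ p = 0
    rw [A, B, hpaF2, hpbF2, hsymΦ, hKGc, ht1, ht2, htu2]
    simp only [px]
    ring
  · have e3 : (fun q => 2 * Real.exp ((r₂ q - r₁ q) / 2) * Φ (r₁ q, r₂ q) * px r₃ q)
        = (fun q => Real.exp ((r₂ q - r₁ q) / 2) * (2 * Φ (r₁ q, r₂ q)) * px r₃ q) := by
      funext q; ring
    have A := key (fun z => 2 * Φ z) hF₃ r₁ r₂ (fun q => px r₃ q) p d1 d2 du3 (1, 0)
    have B := key (fun z => 2 * Φ z) hF₃ r₁ r₂ (fun q => px r₃ q) p d1 d2 du3 (0, 1)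
    beta_reduce at A B
    show fderiv ℝ (fun q => 2 * Real.exp ((r₂ q - r₁ q) / 2) *
          Φ (r₁ q, r₂ q) * px r₃ q) p (1, 0)
        + (r₁ p + r₂ p) * fderiv ℝ (fun q => 2 * Real.exp ((r₂ q - r₁ q) / 2) *
          Φ (r₁ q, r₂ q) * px r₃ q) p (0, 1)
        + (Real.exp ((r₂ p - r₁ p) / 2) * (Φ (r₁ p, r₂ p) + 2 * pa Φ (r₁ p, r₂ p)) * px r₁ p
          + Real.exp ((r₂ p - r₁ p) / 2) * (Φ (r₁ p, r₂ p) - 2 * pb Φ (r₁ p, r₂ p)) * px r₂ p)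
          * px r₃ p = 0
    rw [e3, A, B, hpaF3, hpbF3, ht1, ht2, htu3]
    simp only [px]
    ring

end
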